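/- Let G be a connected weighted graph with incidence matrix B, weight matrix 𝒜, Laplacian L = B𝒜Bᵀ, and cutset projection 𝒫 = Bᵀ L† B𝒜. For any γ ∈ [0, π/2), any p ∈ [1,∞], any y ∈ ℝ^m with ‖y‖_p ≤ γ, and any z ∈ Im(Bᵀ), if 𝒫 diag(sinc(y)) z = 0 then z = 0. In particular the minimum amplification factor α_p(γ) = min over such y and unit z of ‖𝒫 diag(sinc(y)) z‖_p is strictly positive. -/

import Mathlib

open Matrix

/-- The unnormalized sinc function, `sinc t = sin t / t` with `sinc 0 = 1`. -/
noncomputable def sinc (t : ℝ) : ℝ := if t = 0 then 1 else Real.sin t / t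

/-- The `p`-norm of a real vector, for `p ∈ [1,∞]`. -/
noncomputable def pnorm {k : ℕ} (p : ENNReal) [Fact (1 ≤ p)] (v : Fin k → ℝ) : ℝ :=
  ‖(WithLp.equiv p (Fin k → ℝ)).symm v‖

lemma sinc_pos {t : ℝ} (ht : |t| < Real.pi) : 0 < sinc t := by
  rcases lt_trichotomy t 0 with h | h | h
  · have h1 : -t < Real.pi := by
      rw [abs_of_neg h] at ht; exact ht
    have h2 : 0 < Real.sin (-t) := Real.sin_pos_of_pos_of_lt_pi (by linarith) h1
    rw [Real.sin_neg] at h2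
    rw [sinc, if_neg (ne_of_lt h)]
    exact div_pos_iff.mpr (Or.inr ⟨by linarith, h⟩)
  · simp [sinc, h]
  · rw [abs_of_pos h] at ht
    rw [sinc, if_neg (ne_of_gt h)]
    exact div_pos (Real.sin_pos_of_pos_of_lt_pi h ht) h

lemma continuous_sinc : Continuous sinc := by
  rw [continuous_iff_continuousAt]
  intro x
  rcases eq_or_ne x 0 with rfl | hx
  · have h := Real.hasDerivAt_sin 0
    rw [hasDerivAt_iff_tendsto_slope] at h
    rw [Real.cos_zero] at h
    have heq : Filter.Tendsto sinc (nhdsWithin 0 {(0:ℝ)}ᶜ) (nhds 1) := by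
      refine h.congr' ?_
      filter_upwards [self_mem_nhdsWithin] with t ht
      simp only [Set.mem_compl_iff, Set.mem_singleton_iff] at ht
      simp [slope, sinc, ht, Real.sin_zero, div_eq_inv_mul]
    have : ContinuousAt sinc 0 := by
      unfold ContinuousAt
      have h0 : sinc 0 = 1 := by simp [sinc]
      rw [h0, ← nhdsNE_sup_pure 0, Filter.tendsto_sup]
      exact ⟨heq, by rw [Filter.tendsto_pure_left]; intro s hs; simpa [h0] using mem_of_mem_nhds hs⟩
    exact this
  · have hbase : ContinuousAt (fun t => Real.sin t / t) x :=
      (Real.continuous_sin.continuousAt).div continuousAt_id hx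
    refine hbase.congr ?_
    filter_upwards [eventually_ne_nhds hx] with t ht
    simp [sinc, ht]

lemma abs_le_pnorm {k : ℕ} (p : ENNReal) [Fact (1 ≤ p)] (v : Fin k → ℝ) (i : Fin k) :
    |v i| ≤ pnorm p v := by
  have h1 : (1 : ENNReal) ≤ p := Fact.out
  rcases eq_or_ne p ⊤ with rfl | hp
  · rw [pnorm, PiLp.norm_eq_ciSup]
    exact le_ciSup (f := fun j => ‖((WithLp.equiv ⊤ (Fin k → ℝ)).symm v) j‖)
      (Set.Finite.bddAbove (Set.finite_range _)) i
  · have hq : 0 < p.toReal := by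
      refine ENNReal.toReal_pos ?_ hp
      intro h0; rw [h0] at h1; exact absurd h1 (by simp)
    rw [pnorm, PiLp.norm_eq_sum hq]
    set q := p.toReal with hqdef
    have habs : |v i| = (|v i| ^ q) ^ (1 / q) := by
      rw [← Real.rpow_mul (abs_nonneg _), mul_one_div_cancel hq.ne', Real.rpow_one]
    rw [habs]
    apply Real.rpow_le_rpow (Real.rpow_nonneg (abs_nonneg _) _) _ (by positivity)
    have : |v i| ^ q = ‖((WithLp.equiv p (Fin k → ℝ)).symm v) i‖ ^ q := by
      norm_num [Real.norm_eq_abs]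
    rw [this]
    exact Finset.single_le_sum (f := fun j => ‖((WithLp.equiv p (Fin k → ℝ)).symm v) j‖ ^ q)
      (fun j _ => Real.rpow_nonneg (norm_nonneg _) _) (Finset.mem_univ i)

lemma pnorm_nonneg {k : ℕ} (p : ENNReal) [Fact (1 ≤ p)] (v : Fin k → ℝ) :
    0 ≤ pnorm p v := norm_nonneg _

lemma pnorm_eq_zero_iff {k : ℕ} (p : ENNReal) [Fact (1 ≤ p)] (v : Fin k → ℝ) :
    pnorm p v = 0 ↔ v = 0 := by
  rw [pnorm, norm_eq_zero]
  exact WithLp.toLp_eq_zero p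

lemma continuous_pnorm {k : ℕ} (p : ENNReal) [Fact (1 ≤ p)] :
    Continuous (fun v : Fin k → ℝ => pnorm p v) :=
  continuous_norm.comp (PiLp.continuous_toLp p (fun _ : Fin k => ℝ))

lemma conj_zero_matrix {n m : ℕ} {M : Matrix (Fin n) (Fin m) ℝ} {a : Fin m → ℝ}
    (ha : ∀ e, 0 < a e) (h : M * Matrix.diagonal a * Mᵀ = 0) : M = 0 := by
  ext i e
  have h0 : (M * Matrix.diagonal a * Mᵀ) i i = 0 := by rw [h]; rfl
  rw [Matrix.mul_apply] at h0
  have hterm : ∀ j, (M * Matrix.diagonal a) i j * Mᵀ j i = a j * M i j ^ 2 := by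
    intro j; rw [Matrix.mul_diagonal, Matrix.transpose_apply]; ring
  rw [Finset.sum_congr rfl (fun j _ => hterm j)] at h0
  have hz := (Finset.sum_eq_zero_iff_of_nonneg
    (fun j _ => by have := (ha j).le; positivity)).mp h0 e (Finset.mem_univ e)
  have : M i e ^ 2 = 0 := by
    rcases mul_eq_zero.mp hz with h' | h'
    · exact absurd h' (ha e).ne'
    · exact h'
  simpa using pow_eq_zero_iff (n := 2) (by norm_num) |>.mp this

set_option maxHeartbeats 1000000 in
theorem scaled_projection_injective_and_min_amplification_pos
    (n m : ℕ) (B : Matrix (Fin n) (Fin m) ℝ) (a : Fin m → ℝ)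
    (ha : ∀ e, 0 < a e)
    (hconn : ∀ x : Fin n → ℝ, Bᵀ.mulVec x = 0 ↔ ∃ c : ℝ, x = fun _ => c)
    (L Ldag : Matrix (Fin n) (Fin n) ℝ)
    (hL : L = B * Matrix.diagonal a * Bᵀ)
    (hmp1 : L * Ldag * L = L) (hmp2 : Ldag * L * Ldag = Ldag)
    (hmp3 : (L * Ldag)ᵀ = L * Ldag) (hmp4 : (Ldag * L)ᵀ = Ldag * L)
    (P : Matrix (Fin m) (Fin m) ℝ)
    (hP : P = Bᵀ * Ldag * B * Matrix.diagonal a)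
    (γ : ℝ) (hγ : 0 ≤ γ ∧ γ < Real.pi / 2)
    (p : ENNReal) [Fact (1 ≤ p)] :
    (∀ y z : Fin m → ℝ, pnorm p y ≤ γ → (∃ ξ : Fin n → ℝ, z = Bᵀ.mulVec ξ) →
      P.mulVec (fun e => sinc (y e) * z e) = 0 → z = 0) ∧
    (∃ α : ℝ, 0 < α ∧ ∀ y z : Fin m → ℝ, pnorm p y ≤ γ →
      (∃ ξ : Fin n → ℝ, z = Bᵀ.mulVec ξ) → pnorm p z = 1 →
      α ≤ pnorm p (P.mulVec (fun e => sinc (y e) * z e))) := by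
  -- Step 1: L * Ldag * B = B
  have hQL : (1 - L * Ldag) * L = 0 := by
    rw [Matrix.sub_mul, Matrix.one_mul, hmp1, sub_self]
  have hQsym : (1 - L * Ldag)ᵀ = 1 - L * Ldag := by
    rw [Matrix.transpose_sub, Matrix.transpose_one, hmp3]
  have hQB : (1 - L * Ldag) * B = 0 := by
    apply conj_zero_matrix ha
    have : (1 - L * Ldag) * B * Matrix.diagonal a * ((1 - L * Ldag) * B)ᵀ
        = (1 - L * Ldag) * L * (1 - L * Ldag) := by
      rw [Matrix.transpose_mul, hQsym, hL]
      simp only [Matrix.mul_assoc]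
    rw [this, hQL, Matrix.zero_mul]
  have step2 : L * Ldag * B = B := by
    have h := hQB
    rw [Matrix.sub_mul, Matrix.one_mul, sub_eq_zero] at h
    exact h.symm
  -- Step 2: B * A * P = B * A
  have step3 : B * Matrix.diagonal a * P = B * Matrix.diagonal a := by
    rw [hP]
    simp only [← Matrix.mul_assoc]
    rw [← hL, step2]
  -- Part 1
  have hpi2 : Real.pi / 2 < Real.pi := by linarith [Real.pi_pos]
  have part1 : ∀ y z : Fin m → ℝ, pnorm p y ≤ γ → (∃ ξ : Fin n → ℝ, z = Bᵀ.mulVec ξ) →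
      P.mulVec (fun e => sinc (y e) * z e) = 0 → z = 0 := by
    rintro y z hy ⟨ξ, hz⟩ h0
    have hsinc : ∀ e, 0 < sinc (y e) := fun e =>
      sinc_pos (lt_trans (lt_of_le_of_lt (le_trans (abs_le_pnorm p y e) hy) hγ.2) hpi2)
    have hz' : z = ξ ᵥ* B := by rw [hz, Matrix.mulVec_transpose]
    have key : ∀ u : Fin m → ℝ,
        (z ᵥ* Matrix.diagonal a) ⬝ᵥ (P *ᵥ u) = (z ᵥ* Matrix.diagonal a) ⬝ᵥ u := by
      intro u
      rw [Matrix.dotProduct_mulVec]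
      congr 1
      rw [hz', Matrix.vecMul_vecMul, Matrix.vecMul_vecMul, ← Matrix.mul_assoc, step3,
        ← Matrix.vecMul_vecMul]
    have hsum : (z ᵥ* Matrix.diagonal a) ⬝ᵥ (fun e => sinc (y e) * z e) = 0 := by
      rw [← key, h0, dotProduct_zero]
    rw [dotProduct] at hsum
    have hterm : ∀ e, (z ᵥ* Matrix.diagonal a) e * (sinc (y e) * z e)
        = (a e * sinc (y e)) * (z e * z e) := by
      intro e; rw [Matrix.vecMul_diagonal]; ring
    rw [Finset.sum_congr rfl (fun e _ => hterm e)] at hsum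
    funext e
    have hz0 := (Finset.sum_eq_zero_iff_of_nonneg (fun e _ => by
      have h1 := (ha e).le; have h2 := (hsinc e).le
      have := mul_self_nonneg (z e); positivity)).mp hsum e (Finset.mem_univ e)
    rcases mul_eq_zero.mp hz0 with h' | h'
    · exact absurd h' (mul_pos (ha e) (hsinc e)).ne'
    · exact mul_self_eq_zero.mp h'
  refine ⟨part1, ?_⟩
  -- Part 2: compactness
  set S : Set ((Fin m → ℝ) × (Fin m → ℝ)) :=
    {q | pnorm p q.1 ≤ γ ∧ (∃ ξ : Fin n → ℝ, q.2 = Bᵀ.mulVec ξ) ∧ pnorm p q.2 = 1} with hS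
  set g : ((Fin m → ℝ) × (Fin m → ℝ)) → ℝ :=
    fun q => pnorm p (P.mulVec (fun e => sinc (q.1 e) * q.2 e)) with hg
  by_cases hne : S.Nonempty
  · have hSclosed : IsClosed S := by
      have h1 : IsClosed {q : (Fin m → ℝ) × (Fin m → ℝ) | pnorm p q.1 ≤ γ} :=
        isClosed_le ((continuous_pnorm p).comp continuous_fst) continuous_const
      have hrange : IsClosed {z : Fin m → ℝ | ∃ ξ : Fin n → ℝ, z = Bᵀ.mulVec ξ} := by
        have hcl : IsClosed ((LinearMap.range Bᵀ.mulVecLin : Submodule ℝ (Fin m → ℝ)) :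
            Set (Fin m → ℝ)) :=
          Submodule.closed_of_finiteDimensional _
        convert hcl using 1
        ext z
        simp [LinearMap.mem_range, Matrix.mulVecLin_apply, eq_comm, Matrix.mulVec_transpose]
      have h2 : IsClosed {q : (Fin m → ℝ) × (Fin m → ℝ) | ∃ ξ : Fin n → ℝ, q.2 = Bᵀ.mulVec ξ} :=
        hrange.preimage continuous_snd
      have h3 : IsClosed {q : (Fin m → ℝ) × (Fin m → ℝ) | pnorm p q.2 = 1} :=
        isClosed_eq ((continuous_pnorm p).comp continuous_snd) continuous_const
      rw [hS]
      exact (h1.inter (h2.inter h3) : _)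
    have hSbdd : Bornology.IsBounded S := by
      rw [Metric.isBounded_iff_subset_closedBall 0]
      refine ⟨max γ 1, fun q hq => ?_⟩
      obtain ⟨hq1, _, hq3⟩ := hq
      rw [Metric.mem_closedBall, dist_zero_right, Prod.norm_def]
      apply max_le
      · refine le_trans ?_ (le_max_left γ 1)
        refine (pi_norm_le_iff_of_nonneg hγ.1).mpr fun i => ?_
        exact le_trans (abs_le_pnorm p q.1 i) hq1
      · refine le_trans ?_ (le_max_right γ 1)
        refine (pi_norm_le_iff_of_nonneg zero_le_one).mpr fun i => ?_
        exact hq3 ▸ abs_le_pnorm p q.2 i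
    have hScompact : IsCompact S := Metric.isCompact_of_isClosed_isBounded hSclosed hSbdd
    have hgcont : Continuous g := by
      apply (continuous_pnorm p).comp
      apply (Matrix.mulVecLin P).continuous_of_finiteDimensional.comp
      exact continuous_pi fun e =>
        ((continuous_sinc.comp ((continuous_apply e).comp continuous_fst)).mul
          ((continuous_apply e).comp continuous_snd))
    obtain ⟨q₀, hq₀S, hq₀min⟩ := hScompact.exists_isMinOn hne hgcont.continuousOn
    refine ⟨g q₀, ?_, ?_⟩
    · rcases lt_or_eq_of_le (pnorm_nonneg p (P.mulVec (fun e => sinc (q₀.1 e) * q₀.2 e)))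
        with h | h
      · exact h
      · exfalso
        have hzero : P.mulVec (fun e => sinc (q₀.1 e) * q₀.2 e) = 0 :=
          (pnorm_eq_zero_iff p _).mp h.symm
        have hz2 := part1 q₀.1 q₀.2 hq₀S.1 hq₀S.2.1 hzero
        have h1 := hq₀S.2.2
        rw [hz2] at h1
        rw [(pnorm_eq_zero_iff p 0).mpr rfl] at h1
        exact one_ne_zero h1.symm
    · intro y z hy hzr hz1
      have hmem : (y, z) ∈ S := ⟨hy, hzr, hz1⟩
      have hle : g q₀ ≤ g (y, z) := hq₀min hmem
      rw [hg] at hle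
      exact hle
  · refine ⟨1, one_pos, fun y z hy hzr hz1 => ?_⟩
    have hmem : (y, z) ∈ S := ⟨hy, hzr, hz1⟩
    exact absurd ⟨(y, z), hmem⟩ hne
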